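/- Let 0 < c < A. Define f : [0,1] → [0,1] by f(α) = 1 - ((A + c)/(A - c))·α for α ∈ [0, (A - c)/(2A)], and f(α) = ((A - c)/(A + c))·(1 - α) for α ∈ ((A - c)/(2A), 1]. Then for all v, v' ∈ [-c, c] with v ≠ v', letting P and Q denote the distributions on {A, -A} of the stochastic binary mechanism applied to v and v' respectively, the trade-off function satisfies T(P, Q)(α) ≥ f(α) for all α ∈ [0,1], with equality for all α when {v, v'} = {c, -c}. -/

import Mathlib

open MeasureTheory

/-- The trade-off function `T(P, Q)(α)`: the smallest achievable type II error
`1 - ∫ φ dQ` among all measurable randomized tests `φ` with values in `[0, 1]`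
and type I error `∫ φ dP ≤ α`. -/
noncomputable def tradeOff {Ω : Type*} [MeasurableSpace Ω] (P Q : Measure Ω) (α : ℝ) : ℝ :=
  sInf {β : ℝ | ∃ φ : Ω → ℝ, Measurable φ ∧ (∀ x, φ x ∈ Set.Icc (0 : ℝ) 1) ∧
    (∫ x, φ x ∂P) ≤ α ∧ β = 1 - ∫ x, φ x ∂Q}

/-- The distribution of the stochastic binary mechanism with scale `A` applied to `v`:
it outputs `A` with probability `(A + v)/(2A)` and `-A` with probability `(A - v)/(2A)`. -/
noncomputable def binMech (A v : ℝ) : Measure ℝ :=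
  (((A + v) / (2 * A)).toNNReal) • Measure.dirac A +
    (((A - v) / (2 * A)).toNNReal) • Measure.dirac (-A)

/-- The piecewise-linear lower bound trade-off function of the stochastic binary mechanism
with scale `A` and input bound `c`. -/
noncomputable def fBin (A c α : ℝ) : ℝ :=
  if α ≤ (A - c) / (2 * A) then 1 - ((A + c) / (A - c)) * α
  else ((A - c) / (A + c)) * (1 - α)

lemma nnsmul_eq (r : NNReal) (μ : Measure ℝ) : (r • μ) = ((r : ENNReal) • μ) := by
  ext s hs; rw [Measure.smul_apply, Measure.smul_apply, ENNReal.smul_def]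

lemma integral_binMech (A v : ℝ) (hA : 0 < A) (hv : -A ≤ v) (hv2 : v ≤ A)
    (φ : ℝ → ℝ) (hφ : Measurable φ) (hb : ∀ x, φ x ∈ Set.Icc (0:ℝ) 1) :
    ∫ x, φ x ∂(binMech A v) = (A + v) / (2 * A) * φ A + (A - v) / (2 * A) * φ (-A) := by
  have h1 : (0:ℝ) ≤ (A + v) / (2 * A) := div_nonneg (by linarith) (by linarith)
  have h2 : (0:ℝ) ≤ (A - v) / (2 * A) := div_nonneg (by linarith) (by linarith)
  have hint : ∀ (r : ℝ) (a : ℝ), Integrable φ ((r.toNNReal : NNReal) • Measure.dirac a) := by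
    intro r a
    rw [nnsmul_eq]
    have : IsFiniteMeasure (((r.toNNReal : NNReal) : ENNReal) • Measure.dirac a) := by
      constructor
      simp [Measure.smul_apply]
    apply Integrable.mono' (integrable_const 1) hφ.aestronglyMeasurable
    filter_upwards with x
    rw [Real.norm_eq_abs, abs_le]
    exact ⟨by linarith [(hb x).1], (hb x).2⟩
  rw [binMech, integral_add_measure (hint _ _) (hint _ _), nnsmul_eq, nnsmul_eq,
    integral_smul_measure, integral_smul_measure, integral_dirac, integral_dirac]
  simp [Real.coe_toNNReal _ h1, Real.coe_toNNReal _ h2]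

lemma lower_core (A c v v' x y α : ℝ) (hc : 0 < c) (hcA : c < A)
    (hv1 : -c ≤ v) (hv2 : v ≤ c) (hw1 : -c ≤ v') (hw2 : v' ≤ c)
    (hx0 : 0 ≤ x) (hx1 : x ≤ 1) (hy0 : 0 ≤ y) (hy1 : y ≤ 1)
    (hα : (A + v) / (2 * A) * x + (A - v) / (2 * A) * y ≤ α) :
    fBin A c α ≤ 1 - ((A + v') / (2 * A) * x + (A - v') / (2 * A) * y) := by
  have hA : 0 < A := hc.trans hcA
  have h2A : 0 < 2 * A := by linarith
  have hAc : 0 < A - c := by linarith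
  have hAc' : 0 < A + c := by linarith
  have H : (A + v) * x + (A - v) * y ≤ 2 * A * α := by
    have := hα
    rw [div_mul_eq_mul_div, div_mul_eq_mul_div, ← add_div, div_le_iff₀ h2A] at this
    linarith
  rw [fBin]
  split_ifs with h
  · have key : (A + v') / (2 * A) * x + (A - v') / (2 * A) * y ≤ (A + c) / (A - c) * α := by
      rw [div_mul_eq_mul_div, div_mul_eq_mul_div, ← add_div, div_mul_eq_mul_div,
        div_le_div_iff₀ h2A hAc]
      have e1 : (A + v') * (A - c) ≤ (A + c) * (A + v) := by nlinarith
      have e2 : (A - v') * (A - c) ≤ (A + c) * (A - v) := by nlinarith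
      nlinarith [mul_le_mul_of_nonneg_right e1 hx0, mul_le_mul_of_nonneg_right e2 hy0,
        mul_le_mul_of_nonneg_left H hAc'.le]
    linarith
  · have e3 : (A - c) * (A + v) ≤ (A + c) * (A + v') := by nlinarith
    have e4 : (A - c) * (A - v) ≤ (A + c) * (A - v') := by nlinarith
    have expand : 1 - ((A + v') / (2 * A) * x + (A - v') / (2 * A) * y)
        = ((A + v') * (1 - x) + (A - v') * (1 - y)) / (2 * A) := by
      field_simp; ring
    rw [expand, div_mul_eq_mul_div, le_div_iff₀ h2A, div_mul_eq_mul_div, div_le_iff₀ hAc']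
    nlinarith [mul_le_mul_of_nonneg_right e3 (by linarith : (0:ℝ) ≤ 1 - x),
      mul_le_mul_of_nonneg_right e4 (by linarith : (0:ℝ) ≤ 1 - y),
      mul_le_mul_of_nonneg_left H hAc.le]

lemma tradeOff_ge (A c v v' α : ℝ) (hc : 0 < c) (hcA : c < A)
    (hv1 : -c ≤ v) (hv2 : v ≤ c) (hw1 : -c ≤ v') (hw2 : v' ≤ c)
    (hα0 : 0 ≤ α) (hα1 : α ≤ 1) :
    fBin A c α ≤ tradeOff (binMech A v) (binMech A v') α := by
  have hA : 0 < A := hc.trans hcA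
  apply le_csInf
  · exact ⟨1, fun _ => 0, measurable_const, fun x => ⟨le_refl 0, zero_le_one⟩,
      by simpa using hα0, by simp⟩
  · rintro β ⟨φ, hm, hb, hI, rfl⟩
    rw [integral_binMech A v hA (by linarith) (by linarith) φ hm hb] at hI
    rw [integral_binMech A v' hA (by linarith) (by linarith) φ hm hb]
    exact lower_core A c v v' (φ A) (φ (-A)) α hc hcA hv1 hv2 hw1 hw2
      (hb A).1 (hb A).2 (hb (-A)).1 (hb (-A)).2 hI

lemma tradeOff_bddBelow (A v v' α : ℝ) (hA : 0 < A) (hv1 : -A ≤ v') (hv2 : v' ≤ A) :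
    BddBelow {β : ℝ | ∃ φ : ℝ → ℝ, Measurable φ ∧ (∀ x, φ x ∈ Set.Icc (0 : ℝ) 1) ∧
      (∫ x, φ x ∂(binMech A v)) ≤ α ∧ β = 1 - ∫ x, φ x ∂(binMech A v')} := by
  refine ⟨0, ?_⟩
  rintro β ⟨φ, hm, hb, hI, rfl⟩
  rw [integral_binMech A v' hA hv1 hv2 φ hm hb]
  have h1 : (0:ℝ) ≤ (A + v') / (2 * A) := div_nonneg (by linarith) (by linarith)
  have h2 : (0:ℝ) ≤ (A - v') / (2 * A) := div_nonneg (by linarith) (by linarith)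
  have hs : (A + v') / (2 * A) + (A - v') / (2 * A) = 1 := by
    field_simp; ring
  nlinarith [mul_le_mul_of_nonneg_left (hb A).2 h1,
    mul_le_mul_of_nonneg_left (hb (-A)).2 h2]

lemma neg_A_ne_A {A : ℝ} (hA : 0 < A) : (-A : ℝ) ≠ A := by intro h; linarith

lemma tradeOff_le_mem (A c v v' α a b : ℝ) (hc : 0 < c) (hcA : c < A)
    (hv1 : -A ≤ v') (hv2 : v' ≤ A)
    (ha : a ∈ Set.Icc (0:ℝ) 1) (hb : b ∈ Set.Icc (0:ℝ) 1)
    (hI : (A + v) / (2 * A) * a + (A - v) / (2 * A) * b ≤ α)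
    (hII : fBin A c α = 1 - ((A + v') / (2 * A) * a + (A - v') / (2 * A) * b))
    (hv1' : -A ≤ v) (hv2' : v ≤ A) :
    tradeOff (binMech A v) (binMech A v') α ≤ fBin A c α := by
  have hA : 0 < A := hc.trans hcA
  apply csInf_le (tradeOff_bddBelow A v v' α hA hv1 hv2)
  refine ⟨fun x => if x = A then a else b, Measurable.ite (by exact measurableSet_eq)
    measurable_const measurable_const, ?_, ?_, ?_⟩
  · intro x; dsimp only; split_ifs <;> assumption
  · rw [integral_binMech A v hA hv1' hv2' _ (Measurable.ite (by exact measurableSet_eq)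
      measurable_const measurable_const) (fun x => by split_ifs <;> assumption)]
    simpa [neg_A_ne_A hA] using hI
  · rw [integral_binMech A v' hA hv1 hv2 _ (Measurable.ite (by exact measurableSet_eq)
      measurable_const measurable_const) (fun x => by split_ifs <;> assumption)]
    simpa [neg_A_ne_A hA] using hII
/-- For any distinct `v, v' ∈ [-c, c]`, the trade-off function of the stochastic binary
mechanism is bounded below by the piecewise-linear function `fBin A c`, with equality for
all `α` when `{v, v'} = {c, -c}`. -/
theorem tradeOff_binMech_lower_bound (A c : ℝ) (hc : 0 < c) (hcA : c < A) :
    (∀ v ∈ Set.Icc (-c) c, ∀ v' ∈ Set.Icc (-c) c, v ≠ v' →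
      ∀ α ∈ Set.Icc (0 : ℝ) 1, fBin A c α ≤ tradeOff (binMech A v) (binMech A v') α) ∧
    (∀ v v' : ℝ, ({v, v'} : Set ℝ) = ({c, -c} : Set ℝ) →
      ∀ α ∈ Set.Icc (0 : ℝ) 1, tradeOff (binMech A v) (binMech A v') α = fBin A c α) := by
  have hA : 0 < A := hc.trans hcA
  have h2A : 0 < 2 * A := by linarith
  have hAc : 0 < A - c := by linarith
  have hAc' : 0 < A + c := by linarith
  constructor
  · rintro v ⟨hv1, hv2⟩ v' ⟨hw1, hw2⟩ _ α ⟨hα0, hα1⟩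
    exact tradeOff_ge A c v v' α hc hcA hv1 hv2 hw1 hw2 hα0 hα1
  · rintro v v' hset α ⟨hα0, hα1⟩
    have hle1 : 2 * A * α ≤ 2 * A := by nlinarith
    rcases Set.pair_eq_pair_iff.mp hset with ⟨h1, h2⟩ | ⟨h1, h2⟩ <;> rw [h1, h2]
    · -- v = c, v' = -c
      refine le_antisymm ?_ (tradeOff_ge A c c (-c) α hc hcA (by linarith) le_rfl le_rfl
        (by linarith) hα0 hα1)
      by_cases hle : α ≤ (A - c) / (2 * A)
      · have hb1 : 2 * A * α ≤ A - c := by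
          rw [le_div_iff₀ h2A] at hle; linarith
        refine tradeOff_le_mem A c c (-c) α 0 (2 * A * α / (A - c)) hc hcA
          (by linarith) (by linarith)
          ⟨le_rfl, zero_le_one⟩
          ⟨by positivity, by rw [div_le_one hAc]; linarith⟩ ?_ ?_ (by linarith) (by linarith)
        · rw [mul_zero, zero_add]
          apply le_of_eq
          field_simp
        · rw [fBin, if_pos hle, mul_zero, zero_add]
          field_simp
          ring
      · push_neg at hle
        have hb2 : A - c < 2 * A * α := by
          rw [div_lt_iff₀ h2A] at hle; linarith
        refine tradeOff_le_mem A c c (-c) α ((2 * A * α - (A - c)) / (A + c)) 1 hc hcA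
          (by linarith) (by linarith)
          ⟨div_nonneg (by linarith) hAc'.le, by rw [div_le_one hAc']; linarith⟩
          ⟨zero_le_one, le_rfl⟩ ?_ ?_ (by linarith) (by linarith)
        · apply le_of_eq
          field_simp
          ring
        · rw [fBin, if_neg (not_le.mpr hle)]
          field_simp
          ring
    · -- v = -c, v' = c
      refine le_antisymm ?_ (tradeOff_ge A c (-c) c α hc hcA le_rfl (by linarith)
        (by linarith) le_rfl hα0 hα1)
      by_cases hle : α ≤ (A - c) / (2 * A)
      · have hb1 : 2 * A * α ≤ A - c := by
          rw [le_div_iff₀ h2A] at hle; linarith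
        refine tradeOff_le_mem A c (-c) c α (2 * A * α / (A - c)) 0 hc hcA
          (by linarith) (by linarith)
          ⟨by positivity, by rw [div_le_one hAc]; linarith⟩
          ⟨le_rfl, zero_le_one⟩ ?_ ?_ (by linarith) (by linarith)
        · rw [mul_zero, add_zero]
          apply le_of_eq
          field_simp
          ring
        · rw [fBin, if_pos hle, mul_zero, add_zero]
          field_simp
      · push_neg at hle
        have hb2 : A - c < 2 * A * α := by
          rw [div_lt_iff₀ h2A] at hle; linarith
        refine tradeOff_le_mem A c (-c) c α 1 ((2 * A * α - (A - c)) / (A + c)) hc hcA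
          (by linarith) (by linarith)
          ⟨zero_le_one, le_rfl⟩
          ⟨div_nonneg (by linarith) hAc'.le, by rw [div_le_one hAc']; linarith⟩
          ?_ ?_ (by linarith) (by linarith)
        · apply le_of_eq
          field_simp
          ring
        · rw [fBin, if_neg (not_le.mpr hle)]
          field_simp
          ring
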